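/- Let V_1,…,V_K be nonempty pairwise disjoint subsets of {1,…,N} with union V, let P = {V_1,…,V_K}, let c ∈ ℝ^N have strictly positive entries, and let τ ∈ [0,1]. Suppose ρ(P,c) ≥ τ, and suppose a_k ∈ 𝔸_{V_k} satisfies N^eff(a_k,c) ≥ (τ/ρ(P,c))·|V_k| for each k ∈ {1,…,K}. Then a = ∑_{k=1}^K a_k satisfies N^eff(a,c) ≥ τ|V|. -/

import Mathlib

open Finset

/-- The effective sample size `N^eff(a, c)` of an `N × N` matrix. -/
noncomputable def Neff {N : ℕ} (a : Matrix (Fin N) (Fin N) ℝ) (c : Fin N → ℝ) : ℝ :=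
  (∑ i, ∑ j, a i j * c j) ^ 2 / (∑ i, (∑ j, a i j * c j) ^ 2)

/-- The partition effective sample size `N^eff(P, c)` for `P = {V_1, …, V_K}`. -/
noncomputable def NeffP {N K : ℕ} (Vs : Fin K → Finset (Fin N)) (c : Fin N → ℝ) : ℝ :=
  (∑ k, ∑ j ∈ Vs k, c j) ^ 2 / (∑ k, ((Vs k).card : ℝ)⁻¹ * (∑ j ∈ Vs k, c j) ^ 2)

/-- Membership in 𝔸_V. -/
def memA {N : ℕ} (V : Finset (Fin N)) (a : Matrix (Fin N) (Fin N) ℝ) : Prop :=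
  (∀ i j, 0 ≤ a i j) ∧
  (∀ i j, (i ∉ V ∨ j ∉ V) → a i j = 0) ∧
  (∀ i ∈ V, ∑ j, a i j = 1) ∧
  (∀ j ∈ V, ∑ i, a i j = 1)

/-- ρ(P, c) = N^eff(P, c) / |V|, where V is the union of the blocks of P. -/
noncomputable def rhoP {N K : ℕ} (Vs : Fin K → Finset (Fin N)) (c : Fin N → ℝ) : ℝ :=
  NeffP Vs c / ((Finset.univ.biUnion Vs).card : ℝ)

theorem stmt_11 {N K : ℕ} (hN : 1 ≤ N)
    (Vs : Fin K → Finset (Fin N))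
    (hne : ∀ k, (Vs k).Nonempty)
    (hdisj : ∀ k l, k ≠ l → Disjoint (Vs k) (Vs l))
    (c : Fin N → ℝ) (hc : ∀ j, 0 < c j)
    (τ : ℝ) (hτ0 : 0 ≤ τ) (hτ1 : τ ≤ 1)
    (hρ : τ ≤ rhoP Vs c)
    (A : Fin K → Matrix (Fin N) (Fin N) ℝ) (hA : ∀ k, memA (Vs k) (A k))
    (hAess : ∀ k, (τ / rhoP Vs c) * ((Vs k).card : ℝ) ≤ Neff (A k) c) :
    τ * (((Finset.univ.biUnion Vs).card : ℝ)) ≤ Neff (∑ k, A k) c := by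
  classical
  have hNeff_nonneg : 0 ≤ Neff (∑ k, A k) c :=
    div_nonneg (sq_nonneg _) (Finset.sum_nonneg fun i _ => sq_nonneg _)
  rcases eq_or_lt_of_le hτ0 with hτz | hτpos
  · rw [← hτz, zero_mul]; exact hNeff_nonneg
  have hρpos : 0 < rhoP Vs c := lt_of_lt_of_le hτpos hρ
  have hK : K ≠ 0 := by
    rintro rfl
    simp [rhoP, NeffP] at hρ
    linarith
  set r : Fin K → Fin N → ℝ := fun k i => ∑ j, A k i j * c j with hrdef
  set S : Fin K → ℝ := fun k => ∑ j ∈ Vs k, c j with hSdef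
  set D : Fin K → ℝ := fun k => ∑ i, (r k i) ^ 2 with hDdef
  have hSpos : ∀ k, 0 < S k := fun k => Finset.sum_pos (fun j _ => hc j) (hne k)
  have hr_nonneg : ∀ k i, 0 ≤ r k i := fun k i =>
    Finset.sum_nonneg fun j _ => mul_nonneg ((hA k).1 i j) (hc j).le
  have hr_zero : ∀ k i, i ∉ Vs k → r k i = 0 := by
    intro k i hi
    exact Finset.sum_eq_zero fun j _ => by rw [(hA k).2.1 i j (Or.inl hi), zero_mul]
  have hcolsum : ∀ k, ∑ i, r k i = S k := by
    intro k
    have h1 : ∑ i, r k i = ∑ j, (∑ i, A k i j) * c j := by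
      simp only [hrdef]
      rw [Finset.sum_comm]
      simp [Finset.sum_mul]
    rw [h1, hSdef]
    rw [← Finset.sum_subset (Finset.subset_univ (Vs k))]
    · exact Finset.sum_congr rfl fun j hj => by rw [(hA k).2.2.2 j hj, one_mul]
    · intro j _ hj
      rw [Finset.sum_eq_zero fun i _ => (hA k).2.1 i j (Or.inr hj), zero_mul]
  have htot : ∀ i, ∑ j, (∑ k, A k) i j * c j = ∑ k, r k i := by
    intro i
    simp only [Finset.sum_apply, Matrix.sum_apply, Finset.sum_mul]
    rw [Finset.sum_comm]
  have hsq : ∀ i, (∑ k, r k i) ^ 2 = ∑ k, (r k i) ^ 2 := by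
    intro i
    by_cases hi : ∃ k, i ∈ Vs k
    · obtain ⟨k0, hk0⟩ := hi
      have huniq : ∀ l, l ≠ k0 → r l i = 0 := fun l hl =>
        hr_zero l i (fun h => Finset.disjoint_left.mp (hdisj l k0 hl) h hk0)
      rw [Finset.sum_eq_single k0 (fun l _ hl => huniq l hl) (by simp),
          Finset.sum_eq_single k0 (fun l _ hl => by rw [huniq l hl]; ring) (by simp)]
    · push_neg at hi
      have hz : ∀ k, r k i = 0 := fun k => hr_zero k i (hi k)
      simp [hz]
  have hnum : ∑ i, ∑ j, (∑ k, A k) i j * c j = ∑ k, S k := by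
    simp only [htot]
    rw [Finset.sum_comm]
    exact Finset.sum_congr rfl fun k _ => hcolsum k
  have hden : ∑ i, (∑ j, (∑ k, A k) i j * c j) ^ 2 = ∑ k, D k := by
    simp only [htot, hsq]
    rw [Finset.sum_comm]
  have hDpos : ∀ k, 0 < D k := by
    intro k
    obtain ⟨i, hi⟩ : ∃ i, 0 < r k i := by
      by_contra h
      push_neg at h
      have : ∑ i, r k i = 0 :=
        Finset.sum_eq_zero fun i _ => le_antisymm (h i) (hr_nonneg k i)
      rw [hcolsum k] at this
      exact absurd this (hSpos k).ne'
    exact lt_of_lt_of_le (pow_pos hi 2)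
      (Finset.single_le_sum (f := fun i => (r k i) ^ 2) (fun i _ => sq_nonneg _)
        (Finset.mem_univ i))
  have hNA : ∀ k, Neff (A k) c = (S k) ^ 2 / D k := by
    intro k
    have h1 : ∑ i, ∑ j, A k i j * c j = S k := hcolsum k
    rw [Neff, h1]
  haveI : Nonempty (Fin K) := Fin.pos_iff_nonempty.mp (Nat.pos_of_ne_zero hK)
  -- notation
  set T : ℝ := ∑ k, ((Vs k).card : ℝ)⁻¹ * (S k) ^ 2 with hTdef
  set St : ℝ := ∑ k, S k with hStdef
  have hStpos : 0 < St := Finset.sum_pos (fun k _ => hSpos k) Finset.univ_nonempty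
  have hTpos : 0 < T := by
    refine Finset.sum_pos (fun k _ => ?_) Finset.univ_nonempty
    have hcard : (0:ℝ) < ((Vs k).card : ℝ) := by
      exact_mod_cast Finset.card_pos.mpr (hne k)
    exact mul_pos (inv_pos.mpr hcard) (pow_pos (hSpos k) 2)
  set Vc : ℝ := ((Finset.univ.biUnion Vs).card : ℝ) with hVcdef
  have hVcpos : 0 < Vc := by
    have : (Vs (⟨0, Nat.pos_of_ne_zero hK⟩ : Fin K)).Nonempty := hne _
    have hsub : Vs (⟨0, Nat.pos_of_ne_zero hK⟩ : Fin K) ⊆ Finset.univ.biUnion Vs :=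
      Finset.subset_biUnion_of_mem Vs (Finset.mem_univ _)
    have h3 : (Finset.univ.biUnion Vs).Nonempty := this.mono hsub
    rw [hVcdef]
    exact_mod_cast Finset.card_pos.mpr h3
  have hρeq : rhoP Vs c = St ^ 2 / (T * Vc) := by
    rw [rhoP, NeffP, div_div]
  -- per-block bound : D k ≤ (rhoP/τ) * (card⁻¹ * S k ^2)
  have hDk : ∀ k, D k ≤ (rhoP Vs c / τ) * (((Vs k).card : ℝ)⁻¹ * (S k) ^ 2) := by
    intro k
    have h := hAess k
    rw [hNA k] at h
    have hcard : (0:ℝ) < ((Vs k).card : ℝ) := by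
      exact_mod_cast Finset.card_pos.mpr (hne k)
    rw [le_div_iff₀ (hDpos k)] at h
    have h2 : D k * (τ / rhoP Vs c * ((Vs k).card : ℝ)) ≤ S k ^ 2 := by
      calc D k * (τ / rhoP Vs c * ((Vs k).card : ℝ))
          = τ / rhoP Vs c * ((Vs k).card : ℝ) * D k := by ring
        _ ≤ S k ^ 2 := h
    have hpos : 0 < τ / rhoP Vs c * ((Vs k).card : ℝ) :=
      mul_pos (div_pos hτpos hρpos) hcard
    rw [← le_div_iff₀ hpos] at h2
    calc D k ≤ S k ^ 2 / (τ / rhoP Vs c * ((Vs k).card : ℝ)) := h2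
      _ = rhoP Vs c / τ * (((Vs k).card : ℝ)⁻¹ * S k ^ 2) := by
          field_simp
  have hDsum : ∑ k, D k ≤ St ^ 2 / (τ * Vc) := by
    calc ∑ k, D k ≤ ∑ k, (rhoP Vs c / τ) * (((Vs k).card : ℝ)⁻¹ * (S k) ^ 2) :=
          Finset.sum_le_sum fun k _ => hDk k
      _ = (rhoP Vs c / τ) * T := by rw [← Finset.mul_sum]
      _ = St ^ 2 / (τ * Vc) := by
          rw [hρeq]
          field_simp
  have hDtotpos : 0 < ∑ k, D k :=
    Finset.sum_pos (fun k _ => hDpos k) Finset.univ_nonempty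
  rw [Neff, hnum, hden, le_div_iff₀ hDtotpos]
  calc τ * Vc * ∑ k, D k ≤ τ * Vc * (St ^ 2 / (τ * Vc)) :=
        mul_le_mul_of_nonneg_left hDsum (by positivity)
    _ = St ^ 2 := by field_simp
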